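/- arXiv:2509.02562 — 3 statements merged into one kernel-verified Lean document; each statement's English description precedes it below -/
import Mathlib

section
/- For every ε > 0 there exists N such that for all n ≥ N, the burning number satisfies b(T_n^d) ≥ (α_d − ε)·n^{d/(d+1)}, where α_d = ((d+1)!/2^d)^{1/(d+1)}. -/
open MeasureTheory ProbabilityTheory Filter

/-- The discrete torus graph on `(ℤ/nℤ)^d`. -/
def torusGraph (d n : ℕ) : SimpleGraph (Fin d → ZMod n) where
  Adj x y := x ≠ y ∧ ∃ i, (x i = y i + 1 ∨ y i = x i + 1) ∧ ∀ j, j ≠ i → x j = y j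
  symm := ⟨by
    rintro x y ⟨hne, i, hor, hj⟩
    exact ⟨hne.symm, i, hor.symm, fun j hji => (hj j hji).symm⟩⟩
  loopless := ⟨by rintro x ⟨hne, -⟩; exact hne rfl⟩

/-- Closed ball of radius `r` around `x` in the graph metric of the torus. -/
def torusBall (d n : ℕ) (x : Fin d → ZMod n) (r : ℕ) : Set (Fin d → ZMod n) :=
  {y | (torusGraph d n).dist x y ≤ r}

/-- `burnedSet d n x k = ⋃_{i=1}^k B̄(x_i, k−i)`, with the `0`-indexed convention
`x i = x_{i+1}`. -/
def burnedSet (d n : ℕ) (x : ℕ → (Fin d → ZMod n)) (k : ℕ) : Set (Fin d → ZMod n) :=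
  ⋃ i ∈ Finset.range k, torusBall d n (x i) (k - 1 - i)

/-- The burning number of the torus. -/
noncomputable def burningNumber (d n : ℕ) : ℕ :=
  sInf {k | 1 ≤ k ∧ ∃ x : ℕ → (Fin d → ZMod n), burnedSet d n x k = Set.univ}

/-- The first time at which the burning process covers the whole torus. -/
noncomputable def burnTime (d n : ℕ) (x : ℕ → (Fin d → ZMod n)) : ℕ :=
  sInf {k | burnedSet d n x k = Set.univ}

def zdist {n : ℕ} (a : ZMod n) : ℕ := min a.val (n - a.val)

def klift {n : ℕ} (a : ZMod n) : ℤ :=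
  if a.val ≤ n - a.val then (a.val : ℤ) else (a.val : ℤ) - n

def tdist {d n : ℕ} (x y : Fin d → ZMod n) : ℕ := ∑ i, zdist (y i - x i)

open Finset

lemma klift_cast {n : ℕ} [NeZero n] (a : ZMod n) : ((klift a : ℤ) : ZMod n) = a := by
  unfold klift
  split_ifs with h
  · push_cast
    exact ZMod.natCast_rightInverse a
  · push_cast
    simp [ZMod.natCast_self, ZMod.natCast_rightInverse a]

lemma klift_natAbs {n : ℕ} [NeZero n] (a : ZMod n) : (klift a).natAbs = zdist a := by
  have hlt : a.val < n := ZMod.val_lt a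
  unfold klift zdist
  split_ifs with h <;> omega

lemma zdist_le_natAbs {n : ℕ} [NeZero n] (a : ZMod n) (k : ℤ) (hk : (k : ZMod n) = a) :
    zdist a ≤ k.natAbs := by
  have hn : 0 < (n : ℤ) := by exact_mod_cast Nat.pos_of_ne_zero (NeZero.ne n)
  have hv : ((a.val : ℤ)) = k % n := by rw [← hk, ZMod.val_intCast]
  have hlt : a.val < n := ZMod.val_lt a
  have hmod : k % (n : ℤ) = k - n * (k / n) := by rw [Int.emod_def]
  rw [← Nat.cast_le (α := ℤ)]
  rcases le_or_gt 0 k with h0 | h0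
  · have hq : 0 ≤ k / n := Int.ediv_nonneg h0 hn.le
    have : (a.val : ℤ) ≤ k := by
      rw [hv, hmod]
      nlinarith
    calc (zdist a : ℤ) ≤ (a.val : ℤ) := by unfold zdist; exact_mod_cast Nat.min_le_left _ _
      _ ≤ k := this
      _ ≤ (k.natAbs : ℤ) := Int.le_natAbs
  · have hq : k / n ≤ -1 := by
      by_contra hq
      push_neg at hq
      have hq' : 0 ≤ k / n := by omega
      have : 0 ≤ k % n := Int.emod_nonneg k hn.ne'
      rw [hmod] at this
      nlinarith
    have hmul : (n : ℤ) * (k / n) ≤ -n := by nlinarith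
    have : (n : ℤ) - a.val ≤ -k := by rw [hv, hmod]; linarith
    have hnab : (k.natAbs : ℤ) = -k := by omega
    calc (zdist a : ℤ) ≤ ((n - a.val : ℕ) : ℤ) := by
          unfold zdist; exact_mod_cast Nat.min_le_right _ _
      _ ≤ -k := by push_cast; omega
      _ = (k.natAbs : ℤ) := hnab.symm

lemma zdist_add_le {n : ℕ} [NeZero n] (a b : ZMod n) :
    zdist (a + b) ≤ zdist a + zdist b := by
  have h := zdist_le_natAbs (a + b) (klift a + klift b) (by push_cast [klift_cast]; ring)
  calc zdist (a + b) ≤ (klift a + klift b).natAbs := h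
    _ ≤ (klift a).natAbs + (klift b).natAbs := Int.natAbs_add_le _ _
    _ = zdist a + zdist b := by rw [klift_natAbs, klift_natAbs]

lemma zdist_zero {n : ℕ} [NeZero n] : zdist (0 : ZMod n) = 0 := by
  simp [zdist]

lemma zdist_one_le {n : ℕ} [NeZero n] : zdist (1 : ZMod n) ≤ 1 := by
  simpa using zdist_le_natAbs (1 : ZMod n) 1 (by push_cast; ring)

lemma zdist_neg_one_le {n : ℕ} [NeZero n] : zdist (-1 : ZMod n) ≤ 1 := by
  simpa using zdist_le_natAbs (-1 : ZMod n) (-1) (by push_cast; ring)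

lemma tdist_adj_le_one {d n : ℕ} [NeZero n] {x u : Fin d → ZMod n}
    (h : (torusGraph d n).Adj x u) : tdist x u ≤ 1 := by
  obtain ⟨-, i, hor, hj⟩ := h
  have hsum : tdist x u = zdist (u i - x i) := by
    unfold tdist
    refine Finset.sum_eq_single_of_mem i (Finset.mem_univ i) ?_
    intro j _ hji
    rw [hj j hji, sub_self, zdist_zero]
  rw [hsum]
  rcases hor with h1 | h1
  · have : u i - x i = -1 := by rw [h1]; ring
    rw [this]; exact zdist_neg_one_le
  · have : u i - x i = 1 := by rw [h1]; ring
    rw [this]; exact zdist_one_le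

lemma tdist_triangle {d n : ℕ} [NeZero n] (x u y : Fin d → ZMod n) :
    tdist x y ≤ tdist x u + tdist u y := by
  unfold tdist
  rw [← Finset.sum_add_distrib]
  refine Finset.sum_le_sum fun i _ => ?_
  have : y i - x i = (u i - x i) + (y i - u i) := by ring
  rw [this]
  exact zdist_add_le _ _

lemma tdist_le_walk_length {d n : ℕ} [NeZero n] {x y : Fin d → ZMod n}
    (w : (torusGraph d n).Walk x y) : tdist x y ≤ w.length := by
  induction w with
  | nil => simp [tdist, zdist_zero]
  | cons h p ih =>
    rename_i a b c
    calc tdist a c ≤ tdist a b + tdist b c := tdist_triangle _ _ _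
      _ ≤ 1 + p.length := Nat.add_le_add (tdist_adj_le_one h) ih
      _ = (SimpleGraph.Walk.cons h p).length := by simp [Nat.add_comm]

lemma torus_adj_step {d n : ℕ} (hn : 2 ≤ n) (u : Fin d → ZMod n) (i : Fin d) :
    (torusGraph d n).Adj u (Function.update u i (u i + 1)) := by
  haveI : Fact (1 < n) := ⟨hn⟩
  refine ⟨?_, i, Or.inr (by simp), fun j hji => by simp [Function.update_of_ne hji]⟩
  intro heq
  have := congrFun heq i
  simp only [Function.update_self] at this
  exact one_ne_zero (by linear_combination -this)

lemma torus_reach_add {d n : ℕ} (hn : 2 ≤ n) (u : Fin d → ZMod n) (i : Fin d) (m : ℕ) :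
    (torusGraph d n).Reachable u (Function.update u i (u i + (m : ZMod n))) := by
  induction m with
  | zero =>
    simp only [Nat.cast_zero, add_zero, Function.update_eq_self]
    exact SimpleGraph.Reachable.refl u
  | succ m ih =>
    refine ih.trans (SimpleGraph.Adj.reachable ?_)
    have h := torus_adj_step hn (Function.update u i (u i + (m : ZMod n))) i
    have he : Function.update (Function.update u i (u i + (m : ZMod n))) i
        (Function.update u i (u i + (m : ZMod n)) i + 1)
        = Function.update u i (u i + ((m+1 : ℕ) : ZMod n)) := by
      rw [Function.update_self, Function.update_idem]
      push_cast
      ring_nf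
    rwa [he] at h

lemma torus_reachable {d n : ℕ} [NeZero n] (hn : 2 ≤ n) (x y : Fin d → ZMod n) :
    (torusGraph d n).Reachable x y := by
  suffices H : ∀ s : Finset (Fin d), ∀ y : Fin d → ZMod n,
      (∀ i, i ∉ s → x i = y i) → (torusGraph d n).Reachable x y by
    exact H Finset.univ y (fun i hi => absurd (Finset.mem_univ i) hi)
  intro s
  induction s using Finset.induction_on with
  | empty =>
    intro y h
    have hxy : x = y := funext fun i => h i (Finset.notMem_empty i)
    rw [hxy]
  | @insert a s hns ih =>
    intro y h
    set y' := Function.update y a (x a) with hy'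
    have h1 : (torusGraph d n).Reachable x y' := by
      refine ih y' fun i hi => ?_
      rcases eq_or_ne i a with rfl | hia
      · simp [hy']
      · rw [hy', Function.update_of_ne hia]
        exact h i (by simp [hia, hi])
    refine h1.trans ?_
    have h2 := torus_reach_add hn y' a (y a - x a).val
    have he : Function.update y' a (y' a + ((y a - x a).val : ZMod n)) = y := by
      rw [hy', Function.update_idem, Function.update_self, ZMod.natCast_rightInverse]
      funext j
      rcases eq_or_ne j a with rfl | hja
      · simp
      · simp [Function.update_of_ne hja]
    rwa [he] at h2

lemma tdist_le_of_mem_ball {d n : ℕ} [NeZero n] (hn : 2 ≤ n) {x y : Fin d → ZMod n} {r : ℕ}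
    (hy : y ∈ torusBall d n x r) : tdist x y ≤ r := by
  obtain ⟨w, hw⟩ := (torus_reachable hn x y).exists_walk_length_eq_dist
  exact (tdist_le_walk_length w).trans (by rw [hw]; exact hy)

lemma ball_univ {d n : ℕ} [NeZero n] (hn : 2 ≤ n) (x : Fin d → ZMod n) {r : ℕ}
    (hr : Fintype.card (Fin d → ZMod n) ≤ r + 1) : torusBall d n x r = Set.univ := by
  ext y
  simp only [torusBall, Set.mem_setOf_eq, Set.mem_univ, iff_true]
  obtain ⟨w⟩ := torus_reachable hn x y
  have := (SimpleGraph.dist_le w.bypass).trans (Nat.le_of_lt_succ (Nat.lt_of_lt_of_le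
    (w.bypass_isPath.length_lt) hr))
  omega

lemma hockey (d : ℕ) : ∀ k : ℕ, ∑ r ∈ range k, (r + d).choose d = (k + d).choose (d + 1)
  | 0 => by simp [Nat.choose_eq_zero_of_lt (Nat.lt_succ_self d)]
  | (k + 1) => by
    rw [Finset.sum_range_succ, hockey d k]
    have : (k + 1 + d) = (k + d) + 1 := by ring
    rw [this, Nat.choose_succ_succ (k + d) d]
    ring

lemma card_tuple : ∀ d r : ℕ,
    ((Finset.univ : Finset (Fin d → Fin (r + 1))).filter
      (fun f => ∑ i, (f i : ℕ) ≤ r)).card ≤ (r + d).choose d := by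
  intro d
  induction d with
  | zero =>
    intro r
    exact (Finset.card_filter_le _ _).trans (by simp)
  | succ d ih =>
    intro r
    classical
    rw [Finset.card_eq_sum_card_fiberwise
      (f := fun f : Fin (d+1) → Fin (r+1) => f 0) (t := Finset.univ) (fun _ _ => mem_univ _)]
    have hbound : ∀ m : Fin (r + 1),
        ((Finset.univ : Finset (Fin (d+1) → Fin (r+1))).filter
          (fun f => ∑ i, (f i : ℕ) ≤ r) |>.filter (fun f => f 0 = m)).card
          ≤ (r - (m : ℕ) + d).choose d := by
      intro m
      refine (Finset.card_le_card_of_injOn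
        (f := fun f : Fin (d+1) → Fin (r+1) =>
          fun i : Fin d => (⟨min (f i.succ : ℕ) (r - (m : ℕ)), by omega⟩ : Fin (r - (m : ℕ) + 1)))
        ?_ ?_).trans (ih (r - (m : ℕ)))
      · intro f hf
        simp only [Finset.mem_coe, Finset.mem_filter, Finset.mem_univ, true_and] at hf ⊢
        obtain ⟨hsum, h0⟩ := hf
        rw [Fin.sum_univ_succ, h0] at hsum
        refine le_trans (Finset.sum_le_sum (fun i _ => ?_)) (?_ : ∑ i : Fin d, (f i.succ : ℕ) ≤ r - (m : ℕ))
        · exact Nat.min_le_left _ _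
        · omega
      · intro f hf g hg hfg
        simp only [Finset.mem_coe, Finset.coe_filter, Set.mem_setOf_eq, Finset.mem_filter,
          Finset.mem_univ, true_and] at hf hg
        obtain ⟨hfs, hf0⟩ := hf
        obtain ⟨hgs, hg0⟩ := hg
        rw [Fin.sum_univ_succ, hf0] at hfs
        rw [Fin.sum_univ_succ, hg0] at hgs
        have hlef : ∀ i : Fin d, (f i.succ : ℕ) ≤ r - (m : ℕ) := by
          intro i
          have h2 : (f i.succ : ℕ) ≤ ∑ j : Fin d, (f j.succ : ℕ) :=
            Finset.single_le_sum (f := fun j : Fin d => (f j.succ : ℕ)) (fun j _ => Nat.zero_le _) (mem_univ i)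
          omega
        have hleg : ∀ i : Fin d, (g i.succ : ℕ) ≤ r - (m : ℕ) := by
          intro i
          have h2 : (g i.succ : ℕ) ≤ ∑ j : Fin d, (g j.succ : ℕ) :=
            Finset.single_le_sum (f := fun j : Fin d => (g j.succ : ℕ)) (fun j _ => Nat.zero_le _) (mem_univ i)
          omega
        funext j
        refine Fin.cases ?_ ?_ j
        · rw [hf0, hg0]
        · intro i
          have := congrFun hfg i
          simp only [Fin.mk.injEq] at this
          rw [Nat.min_eq_left (hlef i), Nat.min_eq_left (hleg i)] at this
          exact Fin.ext this
    calc ∑ m : Fin (r+1), ((Finset.univ : Finset (Fin (d+1) → Fin (r+1))).filter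
          (fun f => ∑ i, (f i : ℕ) ≤ r) |>.filter (fun f => f 0 = m)).card
        ≤ ∑ m : Fin (r+1), (r - (m : ℕ) + d).choose d := Finset.sum_le_sum fun m _ => hbound m
      _ = ∑ m ∈ range (r+1), (r - m + d).choose d := by
          rw [Finset.sum_range fun m => (r - m + d).choose d]
      _ = ∑ m ∈ range (r+1), (m + d).choose d := by
          rw [← Finset.sum_range_reflect]
          refine Finset.sum_congr rfl fun m hm => ?_
          simp only [Finset.mem_range] at hm
          congr 2
          omega
      _ = (r + (d + 1)).choose (d + 1) := by rw [hockey d (r+1)]; congr 1; ring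

lemma zdist_le_tdist {d n : ℕ} (x y : Fin d → ZMod n) (i : Fin d) :
    zdist (y i - x i) ≤ tdist x y :=
  Finset.single_le_sum (f := fun j => zdist (y j - x j)) (fun j _ => Nat.zero_le _) (mem_univ i)

lemma ball_ncard_le {d n : ℕ} [NeZero n] (hn : 2 ≤ n) (x : Fin d → ZMod n) (r : ℕ) :
    (torusBall d n x r).ncard ≤ 2 ^ d * (r + d).choose d := by
  classical
  set S : Finset (Fin d → Fin (r+1)) :=
    Finset.univ.filter (fun f => ∑ i, (f i : ℕ) ≤ r) with hS
  set T : Finset ((Fin d → Bool) × (Fin d → Fin (r+1))) := Finset.univ ×ˢ S with hTdef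
  have step : (torusBall d n x r).ncard ≤ (↑T : Set ((Fin d → Bool) × (Fin d → Fin (r+1)))).ncard := by
    refine Set.ncard_le_ncard_of_injOn
      (fun y => (fun i => decide (0 ≤ klift (y i - x i)),
        fun i => (⟨min (zdist (y i - x i)) r, by omega⟩ : Fin (r+1)))) ?_ ?_ (Set.toFinite _)
    · intro y hy
      have ht := tdist_le_of_mem_ball hn hy
      simp only [hTdef, Finset.coe_product, Set.mem_prod, Finset.mem_coe, Finset.mem_univ,
        true_and, hS, Finset.mem_filter]
      exact le_trans (Finset.sum_le_sum fun i _ => min_le_left _ _) ht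
    · intro y hy y' hy' heq
      have hty := tdist_le_of_mem_ball hn hy
      have hty' := tdist_le_of_mem_ball hn hy'
      rw [Prod.mk.injEq] at heq
      obtain ⟨h1, h2⟩ := heq
      funext i
      have hz : zdist (y i - x i) = zdist (y' i - x i) := by
        have e2 := congrFun h2 i
        simp only [Fin.mk.injEq] at e2
        have b1 : zdist (y i - x i) ≤ r := (zdist_le_tdist x y i).trans hty
        have b2 : zdist (y' i - x i) ≤ r := (zdist_le_tdist x y' i).trans hty'
        omega
      have hsign : (0 ≤ klift (y i - x i)) ↔ (0 ≤ klift (y' i - x i)) :=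
        decide_eq_decide.mp (congrFun h1 i)
      have habs : (klift (y i - x i)).natAbs = (klift (y' i - x i)).natAbs := by
        rw [klift_natAbs, klift_natAbs, hz]
      have hk : klift (y i - x i) = klift (y' i - x i) := by omega
      have hc : y i - x i = y' i - x i := by
        rw [← klift_cast (y i - x i), ← klift_cast (y' i - x i), hk]
      exact sub_left_inj.mp hc
  refine step.trans ?_
  rw [Set.ncard_coe_finset, hTdef, Finset.card_product, Finset.card_univ]
  have hcb : Fintype.card (Fin d → Bool) = 2 ^ d := by
    simp [Fintype.card_fun]
  rw [hcb]
  exact Nat.mul_le_mul_left _ (card_tuple d r)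

lemma ncard_biUnion_le {α ι : Type*} [Fintype α] (s : Finset ι) (f : ι → Set α) :
    (⋃ i ∈ s, f i).ncard ≤ ∑ i ∈ s, (f i).ncard := by
  classical
  induction s using Finset.induction_on with
  | empty => simp
  | @insert a s ha ih =>
    rw [Finset.sum_insert ha, Finset.set_biUnion_insert]
    exact (Set.ncard_union_le _ _).trans (Nat.add_le_add_left ih _)

lemma key_count {d n : ℕ} [NeZero n] (hn : 2 ≤ n) {k : ℕ}
    (hk : ∃ x : ℕ → (Fin d → ZMod n), burnedSet d n x k = Set.univ) :
    n ^ d ≤ 2 ^ d * (k + d).choose (d + 1) := by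
  obtain ⟨x, hx⟩ := hk
  have h1 : (Set.univ : Set (Fin d → ZMod n)).ncard = n ^ d := by
    simp [Set.ncard_univ, Nat.card_eq_fintype_card, Fintype.card_fun, ZMod.card]
  calc n ^ d = (Set.univ : Set (Fin d → ZMod n)).ncard := h1.symm
    _ = (burnedSet d n x k).ncard := by rw [hx]
    _ ≤ ∑ i ∈ Finset.range k, (torusBall d n (x i) (k - 1 - i)).ncard :=
        ncard_biUnion_le _ _
    _ ≤ ∑ i ∈ Finset.range k, 2 ^ d * ((k - 1 - i) + d).choose d :=
        Finset.sum_le_sum fun i _ => ball_ncard_le hn _ _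
    _ = 2 ^ d * ∑ i ∈ Finset.range k, ((k - 1 - i) + d).choose d := by rw [Finset.mul_sum]
    _ = 2 ^ d * ∑ r ∈ Finset.range k, (r + d).choose d := by
        rw [Finset.sum_range_reflect (fun r => (r + d).choose d) k]
    _ = 2 ^ d * (k + d).choose (d + 1) := by rw [hockey]

lemma burn_nonempty {d n : ℕ} [NeZero n] (hn : 2 ≤ n) :
    {k | 1 ≤ k ∧ ∃ x : ℕ → (Fin d → ZMod n), burnedSet d n x k = Set.univ}.Nonempty := by
  refine ⟨n ^ d, Nat.one_le_pow _ _ (by omega), fun _ _ => 0, ?_⟩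
  have hcard : Fintype.card (Fin d → ZMod n) = n ^ d := by
    simp [Fintype.card_fun, ZMod.card]
  have hpos : 1 ≤ n ^ d := Nat.one_le_pow _ _ (by omega)
  have h0 : 0 ∈ Finset.range (n ^ d) := by
    simp only [Finset.mem_range]
    omega
  apply Set.eq_univ_of_univ_subset
  have hb : torusBall d n (fun _ => 0) (n ^ d - 1 - 0) = Set.univ := by
    rw [Nat.sub_zero]
    exact ball_univ hn _ (by rw [hcard]; omega)
  rw [← hb]
  exact Set.subset_iUnion₂ (s := fun i (_ : i ∈ Finset.range (n ^ d)) =>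
    torusBall d n (fun _ => 0) (n ^ d - 1 - i)) 0 h0

lemma final_real {d n k : ℕ} (h : n ^ d ≤ 2 ^ d * (k + d).choose (d + 1)) :
    (((d+1).factorial : ℝ) / 2 ^ d) ^ ((1:ℝ)/(d+1)) * (n:ℝ) ^ ((d:ℝ)/(d+1)) ≤ (k : ℝ) + d := by
  have hnat : n ^ d * (d+1).factorial ≤ 2 ^ d * (k + d) ^ (d+1) := by
    calc n ^ d * (d+1).factorial ≤ (2 ^ d * (k + d).choose (d+1)) * (d+1).factorial :=
          Nat.mul_le_mul_right _ h
      _ = 2 ^ d * ((k + d).descFactorial (d+1)) := by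
          rw [Nat.descFactorial_eq_factorial_mul_choose]; ring
      _ ≤ 2 ^ d * (k + d) ^ (d+1) := Nat.mul_le_mul_left _ (Nat.descFactorial_le_pow _ _)
  have hreal : (n:ℝ) ^ d * ((d+1).factorial : ℝ) ≤ 2 ^ d * ((k:ℝ) + d) ^ (d+1) := by
    exact_mod_cast hnat
  have h2 : (0:ℝ) < 2 ^ d := by positivity
  have hA : (((d+1).factorial : ℝ) / 2 ^ d) * (n:ℝ) ^ d ≤ ((k:ℝ) + d) ^ (d+1) := by
    rw [div_mul_eq_mul_div, div_le_iff₀ h2]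
    linarith [hreal]
  have hd1 : (0:ℝ) < (d:ℝ) + 1 := by positivity
  have hAnn : (0:ℝ) ≤ (((d+1).factorial : ℝ) / 2 ^ d) * (n:ℝ) ^ d := by positivity
  have := Real.rpow_le_rpow hAnn hA (by positivity : (0:ℝ) ≤ 1/((d:ℝ)+1))
  have hkd : (0:ℝ) ≤ (k:ℝ) + d := by positivity
  have hrhs : (((k:ℝ) + d) ^ (d+1)) ^ ((1:ℝ)/((d:ℝ)+1)) = (k:ℝ) + d := by
    rw [← Real.rpow_natCast ((k:ℝ) + d) (d+1), ← Real.rpow_mul hkd]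
    push_cast
    rw [mul_one_div_cancel (by positivity : (d:ℝ)+1 ≠ 0), Real.rpow_one]
  have hlhs : ((((d+1).factorial : ℝ) / 2 ^ d) * (n:ℝ) ^ d) ^ ((1:ℝ)/((d:ℝ)+1))
      = (((d+1).factorial : ℝ) / 2 ^ d) ^ ((1:ℝ)/((d:ℝ)+1)) * (n:ℝ) ^ ((d:ℝ)/((d:ℝ)+1)) := by
    rw [Real.mul_rpow (by positivity) (by positivity)]
    congr 1
    rw [← Real.rpow_natCast (n:ℝ) d, ← Real.rpow_mul (Nat.cast_nonneg n)]
    congr 1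
    field_simp
  rw [hrhs, hlhs] at this
  convert this using 3 <;> push_cast <;> ring


/-- For every `ε > 0` there exists `N` such that for all `n ≥ N`,
`b(T_n^d) ≥ (α_d − ε)·n^{d/(d+1)}`, where `α_d = ((d+1)!/2^d)^{1/(d+1)}`. -/
theorem burningNumber_lower_bound (d : ℕ) (hd : 1 ≤ d) :
    ∀ ε > (0 : ℝ), ∃ N : ℕ, ∀ n ≥ N,
      (((((d+1).factorial : ℝ) / 2 ^ d) ^ ((1 : ℝ) / (d+1)) - ε) * (n : ℝ) ^ ((d : ℝ) / (d+1)))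
        ≤ (burningNumber d n : ℝ) := by
  intro ε hε
  refine ⟨max 2 (⌈((d:ℝ)/ε) ^ 2⌉₊ + 1), fun n hn => ?_⟩
  have hn2 : 2 ≤ n := le_trans (le_max_left _ _) hn
  haveI : NeZero n := ⟨by omega⟩
  have hnN : ((d:ℝ)/ε) ^ 2 ≤ (n:ℝ) := by
    have h0 : ⌈((d:ℝ)/ε)^2⌉₊ + 1 ≤ n := le_trans (le_max_right _ _) hn
    have h1 : (⌈((d:ℝ)/ε) ^ 2⌉₊ : ℝ) ≤ (n:ℝ) := by exact_mod_cast (by omega : ⌈((d:ℝ)/ε)^2⌉₊ ≤ n)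
    exact (Nat.le_ceil _).trans h1
  have hmem : burningNumber d n ∈
      {k | 1 ≤ k ∧ ∃ x : ℕ → (Fin d → ZMod n), burnedSet d n x k = Set.univ} :=
    Nat.sInf_mem (burn_nonempty hn2)
  obtain ⟨hk1, hkcov⟩ := hmem
  set k := burningNumber d n with hkdef
  have hcount := key_count hn2 hkcov
  have hmain := final_real hcount
  have hn1 : (1:ℝ) ≤ (n:ℝ) := by exact_mod_cast Nat.one_le_iff_ne_zero.mpr (by omega)
  set θ : ℝ := (d:ℝ)/((d:ℝ)+1) with hθ
  have hθhalf : (1:ℝ)/2 ≤ θ := by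
    rw [hθ, div_le_div_iff₀ (by norm_num) (by positivity)]
    have : (1:ℝ) ≤ (d:ℝ) := by exact_mod_cast hd
    linarith
  have hmono : (n:ℝ) ^ ((1:ℝ)/2) ≤ (n:ℝ) ^ θ :=
    Real.rpow_le_rpow_of_exponent_le hn1 hθhalf
  set c : ℝ := (d:ℝ)/ε with hc
  have hc0 : 0 ≤ c := by positivity
  have hsqrt : c ≤ (n:ℝ) ^ ((1:ℝ)/2) := by
    have h1 : (c ^ 2) ^ ((1:ℝ)/2) ≤ (n:ℝ) ^ ((1:ℝ)/2) :=
      Real.rpow_le_rpow (by positivity) hnN (by norm_num)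
    have h2 : (c ^ 2) ^ ((1:ℝ)/2) = c := by
      rw [← Real.rpow_natCast c 2, ← Real.rpow_mul hc0]
      norm_num
    linarith [h1, h2.symm.le]
  have hεn : (d:ℝ) ≤ ε * (n:ℝ) ^ θ := by
    have hcn : c ≤ (n:ℝ) ^ θ := hsqrt.trans hmono
    have h3 : ε * c ≤ ε * (n:ℝ) ^ θ := by nlinarith
    rw [hc, mul_div_cancel₀ _ (ne_of_gt hε)] at h3
    exact h3
  have hθpos : (0:ℝ) ≤ (n:ℝ) ^ θ := by positivity
  have hfinal : (((d+1).factorial : ℝ) / 2 ^ d) ^ ((1:ℝ)/(d+1)) * (n:ℝ) ^ θ ≤ (k:ℝ) + d := hmain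
  nlinarith [hfinal, hεn]
end

section
/- Let y : [0,T) → ℝ be the maximal solution of y^{(d+1)} = 2^d·y·y^{(d)} with y(0) = ⋯ = y^{(d−1)}(0) = 0 and y^{(d)}(0) = 1. Then for all t ∈ [0,T), y^{(d)}(t) = exp((2^d/d!)·∫_0^t (t−s)^d·y^{(d)}(s) ds). -/
open MeasureTheory ProbabilityTheory Filter

/-- `y` is a solution on `[0,T)` of the generalised Blasius-type Cauchy problem
`y^{(d+1)} = c·y·y^{(d)}`, `y(0) = ⋯ = y^{(d−1)}(0) = 0`, `y^{(d)}(0) = 1`. -/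
def IsBlasiusSolOn (d : ℕ) (c T : ℝ) (y : ℝ → ℝ) : Prop :=
  ContDiffOn ℝ (d + 1) y (Set.Ico 0 T) ∧
  (∀ k < d, iteratedDerivWithin k y (Set.Ico 0 T) 0 = 0) ∧
  iteratedDerivWithin d y (Set.Ico 0 T) 0 = 1 ∧
  ∀ t ∈ Set.Ico (0 : ℝ) T,
    iteratedDerivWithin (d + 1) y (Set.Ico 0 T) t
      = c * y t * iteratedDerivWithin d y (Set.Ico 0 T) t

/-- `y : [0,T)` is *the maximal solution* of the Cauchy problem
`y^{(d+1)} = c·y·y^{(d)}` with the Blasius initial conditions: it is a solution and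
no solution exists on a longer interval, so `T` is the explosion time. -/
def IsMaxBlasiusSol (d : ℕ) (c T : ℝ) (y : ℝ → ℝ) : Prop :=
  0 < T ∧ IsBlasiusSolOn d c T y ∧
    ∀ (T' : ℝ) (z : ℝ → ℝ), IsBlasiusSolOn d c T' z → T' ≤ T

lemma blasius_ftc_within {T : ℝ} {f : ℝ → ℝ} (hf : ContinuousOn f (Set.Ico 0 T)) {t : ℝ}
    (ht : t ∈ Set.Ico 0 T) :
    HasDerivWithinAt (fun x => ∫ u in (0:ℝ)..x, f u) (f t) (Set.Ico 0 T) t := by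
  obtain ⟨ht0, htT⟩ := ht
  have hsub : Set.Icc 0 t ⊆ Set.Ico 0 T := fun u hu => ⟨hu.1, lt_of_le_of_lt hu.2 htT⟩
  have hint : IntervalIntegrable f volume 0 t := by
    apply ContinuousOn.intervalIntegrable
    rw [Set.uIcc_of_le ht0]
    exact hf.mono hsub
  have haem : AEStronglyMeasurable f (volume.restrict (Set.Ioo 0 T)) :=
    (hf.mono Set.Ioo_subset_Ico_self).aestronglyMeasurable measurableSet_Ioo
  rcases eq_or_lt_of_le ht0 with h0 | h0
  · subst h0
    have hmeas : StronglyMeasurableAtFilter f (nhdsWithin 0 (Set.Ioi 0)) :=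
      ⟨Set.Ioo 0 T, Ioo_mem_nhdsGT_of_mem ⟨le_refl _, htT⟩, haem⟩
    have hcont : ContinuousWithinAt f (Set.Ioi 0) 0 := by
      have hc := hf 0 ⟨le_refl _, htT⟩
      have heq : nhdsWithin (0:ℝ) (Set.Ioi 0) ≤ nhdsWithin 0 (Set.Ico 0 T) := by
        calc nhdsWithin (0:ℝ) (Set.Ioi 0) = nhdsWithin 0 (Set.Ioi 0 ∩ Set.Iio T) :=
              (nhdsWithin_inter_of_mem' (nhdsWithin_le_nhds (Iio_mem_nhds htT))).symm
          _ ≤ nhdsWithin 0 (Set.Ico 0 T) :=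
              nhdsWithin_mono _ (fun u hu => ⟨le_of_lt hu.1, hu.2⟩)
      exact (hc : ContinuousWithinAt f _ 0).mono_left heq
    exact (intervalIntegral.integral_hasDerivWithinAt_right (t := Set.Ioi 0) (s := Set.Ici 0)
      hint hmeas hcont).mono Set.Ico_subset_Ici_self
  · have hnhds : Set.Ico 0 T ∈ nhds t :=
      mem_nhds_iff.2 ⟨Set.Ioo 0 T, Set.Ioo_subset_Ico_self, isOpen_Ioo, ⟨h0, htT⟩⟩
    have hca : ContinuousAt f t := (hf t ⟨ht0, htT⟩).continuousAt hnhds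
    have hmeas : StronglyMeasurableAtFilter f (nhds t) :=
      ⟨Set.Ioo 0 T, mem_nhds_iff.2 ⟨Set.Ioo 0 T, subset_rfl, isOpen_Ioo, ⟨h0, htT⟩⟩, haem⟩
    exact (intervalIntegral.integral_hasDerivAt_right hint hmeas hca).hasDerivWithinAt

lemma blasius_eq_on {T : ℝ} (hT : 0 < T) {f₁ f₂ φ : ℝ → ℝ}
    (h₁ : ∀ t ∈ Set.Ico 0 T, HasDerivWithinAt f₁ (φ t) (Set.Ico 0 T) t)
    (h₂ : ∀ t ∈ Set.Ico 0 T, HasDerivWithinAt f₂ (φ t) (Set.Ico 0 T) t)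
    (h0 : f₁ 0 = f₂ 0) : ∀ t ∈ Set.Ico 0 T, f₁ t = f₂ t := by
  intro t ht
  have key : ∀ x ∈ Set.Ico 0 T, HasDerivWithinAt (fun u => f₁ u - f₂ u) ((fun _ => (0:ℝ)) x)
      (Set.Ico 0 T) x := by
    intro x hx
    exact ((h₁ x hx).sub (h₂ x hx)).congr_deriv (sub_self _)
  have h0mem : (0:ℝ) ∈ Set.Ico 0 T := ⟨le_refl _, hT⟩
  have := Convex.norm_image_sub_le_of_norm_hasDerivWithin_le (C := 0) key
    (fun x _ => by simp) (convex_Ico 0 T) h0mem ht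
  simp only [zero_mul, norm_le_zero_iff, sub_eq_zero] at this
  have : f₁ t - f₂ t = f₁ 0 - f₂ 0 := this
  linarith [this]

lemma blasius_expand {T : ℝ} {g : ℝ → ℝ} (hg : ContinuousOn g (Set.Ico 0 T)) (k : ℕ) {x : ℝ}
    (hx : x ∈ Set.Ico 0 T) :
    (∫ u in (0:ℝ)..x, (x - u)^k * g u)
      = ∑ j ∈ Finset.range (k+1), ((-1:ℝ)^(j+k) * (k.choose j : ℝ))
          * (x^j * ∫ u in (0:ℝ)..x, u^(k-j) * g u) := by
  have hsub : Set.Icc 0 x ⊆ Set.Ico 0 T := fun u hu => ⟨hu.1, lt_of_le_of_lt hu.2 hx.2⟩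
  have hcint : ∀ i : ℕ, ∀ c : ℝ, IntervalIntegrable (fun u => c * (u^i * g u)) volume 0 x := by
    intro i c
    apply ContinuousOn.intervalIntegrable
    rw [Set.uIcc_of_le hx.1]
    exact continuousOn_const.mul (((continuous_pow i).continuousOn).mul (hg.mono hsub))
  have h1 : ∀ u : ℝ, (x - u)^k * g u
      = ∑ j ∈ Finset.range (k+1), ((-1:ℝ)^(j+k) * (k.choose j : ℝ) * x^j) * (u^(k-j) * g u) := by
    intro u
    rw [sub_pow, Finset.sum_mul]
    exact Finset.sum_congr rfl fun j _ => by ring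
  calc (∫ u in (0:ℝ)..x, (x - u)^k * g u)
      = ∫ u in (0:ℝ)..x, ∑ j ∈ Finset.range (k+1),
          ((-1:ℝ)^(j+k) * (k.choose j : ℝ) * x^j) * (u^(k-j) * g u) := by
        simp only [h1]
    _ = ∑ j ∈ Finset.range (k+1), ∫ u in (0:ℝ)..x,
          ((-1:ℝ)^(j+k) * (k.choose j : ℝ) * x^j) * (u^(k-j) * g u) :=
        intervalIntegral.integral_finset_sum (fun j _ => hcint _ _)
    _ = _ := by
        refine Finset.sum_congr rfl fun j _ => ?_
        rw [intervalIntegral.integral_const_mul]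
        ring

lemma blasius_keyD {T : ℝ} {g : ℝ → ℝ} (hg : ContinuousOn g (Set.Ico 0 T)) (m : ℕ) {t : ℝ}
    (ht : t ∈ Set.Ico 0 T) :
    HasDerivWithinAt (fun x => ∫ u in (0:ℝ)..x, (x - u)^(m+1) * g u)
      (((m:ℝ)+1) * ∫ u in (0:ℝ)..t, (t - u)^m * g u) (Set.Ico 0 T) t := by
  set G : ℕ → ℝ → ℝ := fun i x => ∫ u in (0:ℝ)..x, u^i * g u with hG
  have hGder : ∀ i : ℕ, ∀ x ∈ Set.Ico (0:ℝ) T, HasDerivWithinAt (G i) (x^i * g x)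
      (Set.Ico 0 T) x := by
    intro i x hx
    exact blasius_ftc_within (((continuous_pow i).continuousOn).mul hg) hx
  -- derivative of the expanded sum
  have hsum : HasDerivWithinAt
      (fun x => ∑ j ∈ Finset.range (m+2), ((-1:ℝ)^(j+(m+1)) * ((m+1).choose j : ℝ))
          * (x^j * G (m+1-j) x))
      (∑ j ∈ Finset.range (m+2), ((-1:ℝ)^(j+(m+1)) * ((m+1).choose j : ℝ))
          * (((j:ℝ) * t^(j-1)) * G (m+1-j) t + t^j * (t^(m+1-j) * g t)))
      (Set.Ico 0 T) t := by
    apply HasDerivWithinAt.fun_sum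
    intro j _
    exact ((hasDerivWithinAt_pow j t).mul (hGder (m+1-j) t ht)).const_mul _
  -- identify the function with the original integral on the set
  have heqfun : ∀ x ∈ Set.Ico (0:ℝ) T,
      (∫ u in (0:ℝ)..x, (x - u)^(m+1) * g u)
        = ∑ j ∈ Finset.range (m+2), ((-1:ℝ)^(j+(m+1)) * ((m+1).choose j : ℝ))
            * (x^j * G (m+1-j) x) := fun x hx => blasius_expand hg (m+1) hx
  -- identify the derivative value
  have hderiv_eq :
      (∑ j ∈ Finset.range (m+2), ((-1:ℝ)^(j+(m+1)) * ((m+1).choose j : ℝ))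
          * (((j:ℝ) * t^(j-1)) * G (m+1-j) t + t^j * (t^(m+1-j) * g t)))
        = ((m:ℝ)+1) * ∫ u in (0:ℝ)..t, (t - u)^m * g u := by
    rw [blasius_expand hg m ht]
    have hsplit : ∀ j ∈ Finset.range (m+2),
        ((-1:ℝ)^(j+(m+1)) * ((m+1).choose j : ℝ))
            * (((j:ℝ) * t^(j-1)) * G (m+1-j) t + t^j * (t^(m+1-j) * g t))
        = ((-1:ℝ)^(j+(m+1)) * ((m+1).choose j : ℝ)) * (((j:ℝ) * t^(j-1)) * G (m+1-j) t)
          + ((-1:ℝ)^(j+(m+1)) * ((m+1).choose j : ℝ)) * t^(m+1) * g t := by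
      intro j hj
      have hje : j + (m+1-j) = m+1 := by
        rw [Finset.mem_range] at hj; omega
      have : t^j * t^(m+1-j) = t^(m+1) := by rw [← pow_add, hje]
      calc _ = ((-1:ℝ)^(j+(m+1)) * ((m+1).choose j : ℝ)) * (((j:ℝ) * t^(j-1)) * G (m+1-j) t)
          + ((-1:ℝ)^(j+(m+1)) * ((m+1).choose j : ℝ)) * (t^j * t^(m+1-j)) * g t := by ring
        _ = _ := by rw [this]
    rw [Finset.sum_congr rfl hsplit, Finset.sum_add_distrib]
    have hzero : (∑ j ∈ Finset.range (m+2),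
        ((-1:ℝ)^(j+(m+1)) * ((m+1).choose j : ℝ)) * t^(m+1) * g t) = 0 := by
      have hint : (∑ i ∈ Finset.range (m+2), (-1:ℤ)^i * ((m+1).choose i : ℤ)) = 0 :=
        Int.alternating_sum_range_choose_of_ne (by omega)
      have hreal : (∑ i ∈ Finset.range (m+2), (-1:ℝ)^i * ((m+1).choose i : ℝ)) = 0 := by
        exact_mod_cast hint
      calc (∑ j ∈ Finset.range (m+2), ((-1:ℝ)^(j+(m+1)) * ((m+1).choose j : ℝ)) * t^(m+1) * g t)
          = ((-1:ℝ)^(m+1) * (t^(m+1) * g t)) * ∑ j ∈ Finset.range (m+2),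
              (-1:ℝ)^j * ((m+1).choose j : ℝ) := by
            rw [Finset.mul_sum]
            exact Finset.sum_congr rfl fun j _ => by rw [pow_add]; ring
        _ = 0 := by rw [hreal, mul_zero]
    rw [hzero, add_zero]
    -- remaining: the "derivative of powers" part
    rw [Finset.sum_range_succ']
    simp only [Nat.cast_zero, zero_mul, mul_zero, add_zero, zero_add]
    rw [Finset.mul_sum]
    refine Finset.sum_congr rfl fun i hi => ?_
    have hchoose : ((m+1).choose (i+1) : ℝ) * ((i:ℝ)+1) = ((m:ℝ)+1) * (m.choose i : ℝ) := by
      exact_mod_cast congrArg (Nat.cast : ℕ → ℝ) (Nat.add_one_mul_choose_eq m i).symm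
    have hm1 : m + 1 - (i+1) = m - i := by omega
    have hsign : (-1:ℝ)^(i+1+(m+1)) = (-1:ℝ)^(i+m) := by
      rw [show i+1+(m+1) = (i+m)+2 by omega, pow_add]; norm_num
    rw [hm1, hsign]
    push_cast
    simp only [hG]
    linear_combination ((-1:ℝ)^(i+m) * (t^i * ∫ u in (0:ℝ)..t, u^(m-i) * g u)) * hchoose
  rw [← hderiv_eq]
  exact hsum.congr heqfun (heqfun t ht)

/-- If `y : [0,T)` is the maximal solution of `y^{(d+1)} = 2^d·y·y^{(d)}`
with the Blasius initial conditions, then for all `t ∈ [0,T)`,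
`y^{(d)}(t) = exp((2^d/d!)·∫_0^t (t−s)^d·y^{(d)}(s) ds)`. -/
theorem blasius_integral_equation (d : ℕ) (hd : 1 ≤ d)
    (T : ℝ) (y : ℝ → ℝ) (hy : IsMaxBlasiusSol d (2 ^ d) T y) :
    ∀ t ∈ Set.Ico (0 : ℝ) T,
      iteratedDerivWithin d y (Set.Ico 0 T) t
        = Real.exp ((2 ^ d / (d.factorial : ℝ)) *
            ∫ s in (0 : ℝ)..t, (t - s) ^ d * iteratedDerivWithin d y (Set.Ico 0 T) s) := by
  obtain ⟨hT, ⟨hsmooth, hinit, hinitd, hode⟩, -⟩ := hy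
  have hUD : UniqueDiffOn ℝ (Set.Ico (0:ℝ) T) := by
    apply uniqueDiffOn_convex (convex_Ico 0 T)
    rw [interior_Ico]
    exact Set.nonempty_Ioo.2 hT
  set g := iteratedDerivWithin d y (Set.Ico 0 T) with hgdef
  have hg_cont : ContinuousOn g (Set.Ico 0 T) := by
    apply hsmooth.continuousOn_iteratedDerivWithin _ hUD
    exact_mod_cast Nat.le_succ d
  have hy_cont : ContinuousOn y (Set.Ico 0 T) := hsmooth.continuousOn
  have hIDW : ∀ k : ℕ, k ≤ d → ∀ t ∈ Set.Ico (0:ℝ) T,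
      HasDerivWithinAt (iteratedDerivWithin k y (Set.Ico 0 T))
        (iteratedDerivWithin (k+1) y (Set.Ico 0 T) t) (Set.Ico 0 T) t := by
    intro k hk t ht
    have hdiff : DifferentiableOn ℝ (iteratedDerivWithin k y (Set.Ico 0 T)) (Set.Ico 0 T) := by
      apply hsmooth.differentiableOn_iteratedDerivWithin _ hUD
      exact_mod_cast Nat.lt_succ_of_le hk
    have h1 := (hdiff t ht).hasDerivWithinAt
    rwa [iteratedDerivWithin_succ]
  have hg_der : ∀ t ∈ Set.Ico (0:ℝ) T,
      HasDerivWithinAt g ((2^d : ℝ) * y t * g t) (Set.Ico 0 T) t := by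
    intro t ht
    have h1 := hIDW d le_rfl t ht
    rwa [hode t ht] at h1
  set Y := fun x : ℝ => ∫ u in (0:ℝ)..x, y u with hYdef
  have hY_der : ∀ t ∈ Set.Ico (0:ℝ) T, HasDerivWithinAt Y (y t) (Set.Ico 0 T) t :=
    fun t ht => blasius_ftc_within hy_cont ht
  have hY0 : Y 0 = 0 := intervalIntegral.integral_same
  -- solve the linear ODE for g
  have hconst : ∀ t ∈ Set.Ico (0:ℝ) T, g t * Real.exp (-((2^d : ℝ) * Y t)) = 1 := by
    apply blasius_eq_on hT (φ := fun _ => (0:ℝ))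
    · intro t ht
      have he : HasDerivWithinAt (fun x => Real.exp (-((2^d : ℝ) * Y x)))
          (Real.exp (-((2^d : ℝ) * Y t)) * (-((2^d : ℝ) * y t))) (Set.Ico 0 T) t := by
        have := (((hY_der t ht).const_mul ((2:ℝ)^d)).neg).exp
        convert! this using 1
      have h2 := (hg_der t ht).mul he
      convert! h2 using 1
      ring
    · intro t ht
      exact hasDerivWithinAt_const t _ 1
    · simp [hY0, hinitd]
  have hgexp : ∀ t ∈ Set.Ico (0:ℝ) T, g t = Real.exp ((2^d : ℝ) * Y t) := by
    intro t ht
    have h := hconst t ht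
    rw [Real.exp_neg] at h
    field_simp at h
    exact h
  -- the iterated-integral identities
  have hstep : ∀ k : ℕ, k < d → ∀ t ∈ Set.Ico (0:ℝ) T,
      iteratedDerivWithin (d - 1 - k) y (Set.Ico 0 T) t
        = (1/(k.factorial : ℝ)) * ∫ u in (0:ℝ)..t, (t - u)^k * g u := by
    intro k
    induction k with
    | zero =>
      intro hk
      apply blasius_eq_on hT (φ := fun t => g t)
      · intro t ht
        have h := hIDW (d-1) (by omega) t ht
        rwa [show d - 1 + 1 = d from by omega] at h
      · intro t ht
        have h := blasius_ftc_within hg_cont ht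
        simp only [Nat.factorial_zero, Nat.cast_one, pow_zero, one_mul, one_div, inv_one]
        exact h
      · simp [hinit (d-1) (by omega)]
    | succ k ih =>
      intro hk
      have ihk := ih (by omega)
      apply blasius_eq_on hT (φ := fun t => (1/(k.factorial : ℝ)) * ∫ u in (0:ℝ)..t, (t-u)^k * g u)
      · intro t ht
        have h := hIDW (d-1-(k+1)) (by omega) t ht
        rw [show d - 1 - (k+1) + 1 = d - 1 - k from by omega] at h
        rwa [ihk t ht] at h
      · intro t ht
        have h := (blasius_keyD hg_cont k ht).const_mul ((1:ℝ)/(((k+1).factorial : ℕ) : ℝ))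
        convert! h using 1
        have hfac : (((k+1).factorial : ℕ) : ℝ) = ((k:ℝ)+1) * (k.factorial : ℝ) := by
          exact_mod_cast Nat.factorial_succ k
        have hne : (k.factorial : ℝ) ≠ 0 := Nat.cast_ne_zero.2 k.factorial_ne_zero
        rw [hfac]
        field_simp
      · simp [hinit (d-1-(k+1)) (by omega)]
  have hy_eq : ∀ t ∈ Set.Ico (0:ℝ) T,
      y t = (1/((d-1).factorial : ℝ)) * ∫ u in (0:ℝ)..t, (t - u)^(d-1) * g u := by
    intro t ht
    have h := hstep (d-1) (by omega) t ht
    rw [show d - 1 - (d-1) = 0 from by omega] at h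
    simpa [iteratedDerivWithin_zero] using h
  have hY_eq : ∀ t ∈ Set.Ico (0:ℝ) T,
      Y t = (1/(d.factorial : ℝ)) * ∫ u in (0:ℝ)..t, (t - u)^d * g u := by
    apply blasius_eq_on hT (φ := y)
    · exact hY_der
    · intro t ht
      have h := (blasius_keyD hg_cont (d-1) ht).const_mul ((1:ℝ)/(d.factorial : ℝ))
      rw [show d - 1 + 1 = d from by omega] at h
      convert! h using 1
      rw [hy_eq t ht]
      have hdc : ((d - 1 : ℕ) : ℝ) + 1 = (d : ℝ) := by
        have : ((d - 1 : ℕ) : ℝ) = (d : ℝ) - 1 := by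
          rw [Nat.cast_sub hd]; norm_num
        rw [this]; ring
      have hfac : (d.factorial : ℝ) = (d : ℝ) * ((d-1).factorial : ℝ) := by
        have := Nat.succ_pred_eq_of_pos (by omega : 0 < d)
        calc (d.factorial : ℝ) = (((d - 1) + 1).factorial : ℝ) := by rw [show d - 1 + 1 = d from by omega]
          _ = (((d-1):ℕ) + 1 : ℝ) * ((d-1).factorial : ℝ) := by exact_mod_cast Nat.factorial_succ (d-1)
          _ = (d : ℝ) * ((d-1).factorial : ℝ) := by rw [hdc]
      have hne1 : ((d-1).factorial : ℝ) ≠ 0 := Nat.cast_ne_zero.2 (d-1).factorial_ne_zero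
      have hne2 : (d : ℝ) ≠ 0 := Nat.cast_ne_zero.2 (by omega)
      rw [hdc, hfac]
      field_simp
    · rw [hY0, intervalIntegral.integral_same, mul_zero]
  intro t ht
  rw [hgexp t ht, hY_eq t ht]
  congr 1
  ring
end

section
/- Let y : [0,T) → ℝ be the maximal solution of y^{(d+1)} = 2^d·y·y^{(d)} with y(0) = ⋯ = y^{(d−1)}(0) = 0 and y^{(d)}(0) = 1. Then for every p ∈ ℕ: f_p(t) ≤ f_{p+1}(t) for all t ∈ [0,∞), and f_p(t) ≤ y^{(d)}(t) for all t ∈ [0,T). -/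
open MeasureTheory ProbabilityTheory Filter
open Set intervalIntegral Topology

/-- The Picard-type iterates `f_0 = 1`,
`f_{p+1}(t) = exp((2^d/d!)·∫_0^t (t−s)^d·f_p(s) ds)`. -/
noncomputable def blasiusIter (d : ℕ) : ℕ → ℝ → ℝ
  | 0 => fun _ => 1
  | (p + 1) => fun t =>
      Real.exp ((2 ^ d / (d.factorial : ℝ)) *
        ∫ s in (0 : ℝ)..t, (t - s) ^ d * blasiusIter d p s)

private lemma blasius_sum_eq {f : ℝ → ℝ} (k : ℕ) {t : ℝ}
    (hint : ∀ j : ℕ, IntervalIntegrable (fun s => (-s) ^ j * f s) volume 0 t) :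
    (∫ s in (0:ℝ)..t, (t - s) ^ k * f s)
      = ∑ m ∈ Finset.range (k + 1),
          ((k.choose m : ℝ) * t ^ m) * ∫ s in (0:ℝ)..t, (-s) ^ (k - m) * f s := by
  have h1 : (∫ s in (0:ℝ)..t, (t - s) ^ k * f s)
      = ∫ s in (0:ℝ)..t, ∑ m ∈ Finset.range (k + 1),
          ((k.choose m : ℝ) * t ^ m) * ((-s) ^ (k - m) * f s) := by
    apply intervalIntegral.integral_congr
    intro s _
    simp only
    rw [show t - s = t + -s by ring, add_pow, Finset.sum_mul]
    exact Finset.sum_congr rfl fun m _ => by ring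
  rw [h1, intervalIntegral.integral_finset_sum
    (fun m _ => ((hint (k - m)).const_mul ((k.choose m : ℝ) * t ^ m)))]
  exact Finset.sum_congr rfl fun m _ => by
    rw [intervalIntegral.integral_const_mul]

private lemma blasius_cont_Jint {T : ℝ} {f : ℝ → ℝ} (hf : ContinuousOn f (Set.Ico 0 T))
    (k : ℕ) {b : ℝ} (hb0 : 0 ≤ b) (hbT : b < T) :
    ContinuousOn (fun t => ∫ s in (0:ℝ)..t, (t - s) ^ k * f s) (Set.Icc 0 b) := by
  have hint : ∀ (j : ℕ) (t : ℝ), t ∈ Set.Icc (0:ℝ) b →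
      IntervalIntegrable (fun s => (-s) ^ j * f s) volume 0 t := by
    intro j t ht
    apply ContinuousOn.intervalIntegrable
    rw [Set.uIcc_of_le ht.1]
    exact ((continuous_neg.pow j).continuousOn).mul
      (hf.mono fun u hu => ⟨hu.1, lt_of_le_of_lt (le_trans hu.2 ht.2) hbT⟩)
  apply ContinuousOn.congr (f := fun t => ∑ m ∈ Finset.range (k + 1),
      ((k.choose m : ℝ) * t ^ m) * ∫ s in (0:ℝ)..t, (-s) ^ (k - m) * f s)
    ?_ (fun t ht => blasius_sum_eq k (fun j => hint j t ht))
  apply continuousOn_finset_sum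
  intro m _
  apply ContinuousOn.mul
  · exact (continuous_const.mul (continuous_pow m)).continuousOn
  · have hI : IntegrableOn (fun s => (-s) ^ (k - m) * f s) (Set.uIcc (0:ℝ) b) volume := by
      rw [Set.uIcc_of_le hb0]
      apply ContinuousOn.integrableOn_Icc
      exact ((continuous_neg.pow (k - m)).continuousOn).mul
        (hf.mono fun u hu => ⟨hu.1, lt_of_le_of_lt hu.2 hbT⟩)
    have := intervalIntegral.continuousOn_primitive_interval hI
    rwa [Set.uIcc_of_le hb0] at this

private lemma blasius_hasDeriv_Jint {T : ℝ} {f : ℝ → ℝ} (hf : ContinuousOn f (Set.Ico 0 T))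
    (k : ℕ) {x : ℝ} (hx0 : 0 ≤ x) (hxT : x < T) :
    HasDerivWithinAt (fun t => ∫ s in (0:ℝ)..t, (t - s) ^ (k + 1) * f s)
      (((k : ℝ) + 1) * ∫ s in (0:ℝ)..x, (x - s) ^ k * f s) (Set.Ici x) x := by
  have hmem : Set.Ico (0:ℝ) T ∈ 𝓝[Set.Ici x] x :=
    Filter.mem_of_superset (Ico_mem_nhdsGE_of_mem ⟨le_rfl, hxT⟩)
      (Set.Ico_subset_Ico_left hx0)
  have hmem' : Set.Ico (0:ℝ) T ∈ 𝓝[Set.Ioi x] x :=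
    Filter.mem_of_superset (Ioo_mem_nhdsGT_of_mem ⟨le_rfl, hxT⟩)
      (fun u hu => ⟨le_trans hx0 hu.1.le, hu.2⟩)
  have hint : ∀ (j : ℕ) (b : ℝ), 0 ≤ b → b < T →
      IntervalIntegrable (fun s => (-s) ^ j * f s) volume 0 b := by
    intro j b hb0 hbT
    apply ContinuousOn.intervalIntegrable
    rw [Set.uIcc_of_le hb0]
    exact ((continuous_neg.pow j).continuousOn).mul
      (hf.mono fun u hu => ⟨hu.1, lt_of_le_of_lt hu.2 hbT⟩)
  have hB : ∀ j : ℕ, HasDerivWithinAt (fun t => ∫ s in (0:ℝ)..t, (-s) ^ j * f s)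
      ((-x) ^ j * f x) (Set.Ici x) x := by
    intro j
    apply intervalIntegral.integral_hasDerivWithinAt_right (hint j x hx0 hxT)
      ⟨Set.Ico 0 T, hmem', (((continuous_neg.pow j).continuousOn).mul hf).aestronglyMeasurable
        measurableSet_Ico⟩
    exact ((((continuous_neg.pow j).continuousOn).mul hf) x ⟨hx0, hxT⟩).mono_of_mem_nhdsWithin hmem'
  have hsum : HasDerivWithinAt
      (fun t => ∑ m ∈ Finset.range (k + 2),
        (((k+1).choose m : ℝ) * t ^ m) * ∫ s in (0:ℝ)..t, (-s) ^ (k + 1 - m) * f s)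
      (∑ m ∈ Finset.range (k + 2),
        ((((k+1).choose m : ℝ) * ((m : ℝ) * x ^ (m - 1)))
            * (∫ s in (0:ℝ)..x, (-s) ^ (k + 1 - m) * f s)
          + (((k+1).choose m : ℝ) * x ^ m) * ((-x) ^ (k + 1 - m) * f x))) (Set.Ici x) x := by
    apply HasDerivWithinAt.fun_sum
    intro m _
    have h1 : HasDerivWithinAt (fun t : ℝ => ((k+1).choose m : ℝ) * t ^ m)
        (((k+1).choose m : ℝ) * ((m : ℝ) * x ^ (m - 1))) (Set.Ici x) x :=
      ((hasDerivAt_pow m x).hasDerivWithinAt).const_mul _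
    have h2 := h1.mul (hB (k + 1 - m))
    exact h2
  have hJ : HasDerivWithinAt (fun t => ∫ s in (0:ℝ)..t, (t - s) ^ (k + 1) * f s)
      (∑ m ∈ Finset.range (k + 2),
        ((((k+1).choose m : ℝ) * ((m : ℝ) * x ^ (m - 1)))
            * (∫ s in (0:ℝ)..x, (-s) ^ (k + 1 - m) * f s)
          + (((k+1).choose m : ℝ) * x ^ m) * ((-x) ^ (k + 1 - m) * f x))) (Set.Ici x) x := by
    apply hsum.congr_of_eventuallyEq
    · filter_upwards [Ico_mem_nhdsGE_of_mem (⟨le_rfl, hxT⟩ : x ∈ Set.Ico x T)] with t ht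
      exact blasius_sum_eq (k + 1) (fun j => hint j t (le_trans hx0 ht.1) ht.2)
    · exact blasius_sum_eq (k + 1) (fun j => hint j x hx0 hxT)
  convert hJ using 1
  rw [Finset.sum_add_distrib]
  have h2 : (∑ m ∈ Finset.range (k + 2),
      (((k+1).choose m : ℝ) * x ^ m) * ((-x) ^ (k + 1 - m) * f x)) = 0 := by
    have h3 : (∑ m ∈ Finset.range (k + 2),
        (((k+1).choose m : ℝ) * x ^ m) * ((-x) ^ (k + 1 - m) * f x))
        = ((x + -x) ^ (k + 1)) * f x := by
      rw [add_pow, Finset.sum_mul]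
      exact Finset.sum_congr rfl fun m _ => by ring
    rw [h3]
    simp
  rw [h2, add_zero]
  rw [Finset.sum_range_succ']
  simp only [Nat.cast_zero, zero_mul, mul_zero, zero_add, add_zero]
  rw [blasius_sum_eq k (fun j => hint j x hx0 hxT), Finset.mul_sum]
  apply Finset.sum_congr rfl
  intro m hm
  have hc : (((k+1).choose (m+1) : ℝ)) * ((m : ℝ) + 1) = ((k : ℝ) + 1) * (k.choose m : ℝ) := by
    have h4 : ((k + 1) * k.choose m : ℕ) = ((k+1).choose (m+1) * (m+1) : ℕ) :=
      Nat.add_one_mul_choose_eq k m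
    exact_mod_cast h4.symm
  have hsub : k + 1 - (m + 1) = k - m := by omega
  rw [hsub]
  push_cast
  have : (((k+1).choose (m+1) : ℝ)) * (((m : ℝ) + 1) * x ^ m)
      * (∫ s in (0:ℝ)..x, (-s) ^ (k - m) * f s)
      = ((((k+1).choose (m+1) : ℝ)) * ((m : ℝ) + 1)) * x ^ m
        * (∫ s in (0:ℝ)..x, (-s) ^ (k - m) * f s) := by ring
  rw [this, hc]
  ring

private lemma blasius_cont_Jint_global {f : ℝ → ℝ} (hf : Continuous f) (k : ℕ) :
    Continuous fun t => ∫ s in (0:ℝ)..t, (t - s) ^ k * f s := by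
  have hint : ∀ (j : ℕ) (a b : ℝ), IntervalIntegrable (fun s => (-s) ^ j * f s) volume a b :=
    fun j a b => (((continuous_neg.pow j).mul hf).intervalIntegrable a b)
  have heq : (fun t => ∫ s in (0:ℝ)..t, (t - s) ^ k * f s)
      = fun t => ∑ m ∈ Finset.range (k + 1),
          ((k.choose m : ℝ) * t ^ m) * ∫ s in (0:ℝ)..t, (-s) ^ (k - m) * f s :=
    funext fun t => blasius_sum_eq k (fun j => hint j 0 t)
  rw [heq]
  apply continuous_finset_sum
  intro m _
  exact (continuous_const.mul (continuous_pow m)).mul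
    (intervalIntegral.continuous_primitive (hint (k - m)) 0)

private lemma blasiusIter_cont (d p : ℕ) : Continuous (blasiusIter d p) := by
  induction p with
  | zero => exact continuous_const
  | succ p ih =>
    show Continuous fun t => Real.exp ((2 ^ d / (d.factorial : ℝ)) *
        ∫ s in (0 : ℝ)..t, (t - s) ^ d * blasiusIter d p s)
    exact Real.continuous_exp.comp (continuous_const.mul (blasius_cont_Jint_global ih d))

private lemma blasiusIter_one_le (d p : ℕ) : ∀ t : ℝ, 0 ≤ t → 1 ≤ blasiusIter d p t := by
  induction p with
  | zero => intro t _; simp [blasiusIter]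
  | succ p ih =>
    intro t ht
    show (1:ℝ) ≤ Real.exp _
    rw [← Real.exp_zero]
    apply Real.exp_le_exp.2
    apply mul_nonneg (by positivity)
    apply intervalIntegral.integral_nonneg ht
    intro u hu
    exact mul_nonneg (pow_nonneg (sub_nonneg.2 hu.2) d)
      (le_trans zero_le_one (ih u hu.1))

private lemma blasiusIter_mono (d p : ℕ) :
    ∀ t : ℝ, 0 ≤ t → blasiusIter d p t ≤ blasiusIter d (p + 1) t := by
  induction p with
  | zero =>
    intro t ht
    simpa [blasiusIter] using blasiusIter_one_le d 1 t ht
  | succ p ih =>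
    intro t ht
    show Real.exp _ ≤ Real.exp _
    apply Real.exp_le_exp.2
    apply mul_le_mul_of_nonneg_left _ (by positivity)
    apply intervalIntegral.integral_mono_on ht
    · apply Continuous.intervalIntegrable
      exact (continuous_const.sub continuous_id).pow d |>.mul (blasiusIter_cont d p)
    · apply Continuous.intervalIntegrable
      exact (continuous_const.sub continuous_id).pow d |>.mul (blasiusIter_cont d (p + 1))
    · intro u hu
      exact mul_le_mul_of_nonneg_left (ih u hu.1) (pow_nonneg (sub_nonneg.2 hu.2) d)

private lemma blasius_key {d : ℕ} (hd : 1 ≤ d) {T : ℝ} {y : ℝ → ℝ}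
    (hsol : IsBlasiusSolOn d (2 ^ d) T y) :
    ∀ t ∈ Set.Ico (0:ℝ) T,
      (0 ≤ ∫ s in (0:ℝ)..t, (t - s) ^ d * iteratedDerivWithin d y (Set.Ico 0 T) s) ∧
      iteratedDerivWithin d y (Set.Ico 0 T) t
        = Real.exp ((2 ^ d / (d.factorial : ℝ)) *
            ∫ s in (0:ℝ)..t, (t - s) ^ d * iteratedDerivWithin d y (Set.Ico 0 T) s) := by
  obtain ⟨hreg, hinit, hinitd, hODE⟩ := hsol
  have hud : UniqueDiffOn ℝ (Set.Ico (0:ℝ) T) := uniqueDiffOn_Ico 0 T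
  have hyc : ContinuousOn y (Set.Ico (0:ℝ) T) := hreg.continuousOn
  have hkc : ∀ k : ℕ, k ≤ d → ContinuousOn (iteratedDerivWithin k y (Set.Ico 0 T))
      (Set.Ico (0:ℝ) T) := by
    intro k hk
    apply hreg.continuousOn_iteratedDerivWithin _ hud
    exact_mod_cast le_trans (Nat.cast_le.2 hk) le_self_add
  have hgc := hkc d le_rfl
  have hder : ∀ k : ℕ, k ≤ d → ∀ x ∈ Set.Ico (0:ℝ) T,
      HasDerivWithinAt (iteratedDerivWithin k y (Set.Ico 0 T))
        (iteratedDerivWithin (k + 1) y (Set.Ico 0 T) x) (Set.Ico 0 T) x := by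
    intro k hk x hx
    have h1 : DifferentiableWithinAt ℝ (iteratedDerivWithin k y (Set.Ico 0 T))
        (Set.Ico 0 T) x := by
      apply hreg.differentiableOn_iteratedDerivWithin _ hud x hx
      exact_mod_cast Nat.lt_succ_of_le hk
    have h2 := h1.hasDerivWithinAt
    rwa [← iteratedDerivWithin_succ] at h2
  have toIci : ∀ {F : ℝ → ℝ} {F' x : ℝ}, x ∈ Set.Ico (0:ℝ) T →
      HasDerivWithinAt F F' (Set.Ico 0 T) x → HasDerivWithinAt F F' (Set.Ici x) x := by
    intro F F' x hx h
    exact h.mono_of_mem_nhdsWithin (Filter.mem_of_superset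
      (Ico_mem_nhdsGE_of_mem ⟨le_rfl, hx.2⟩) (Set.Ico_subset_Ico_left hx.1))
  have hFTC : ∀ (h : ℝ → ℝ), ContinuousOn h (Set.Ico 0 T) → ∀ x ∈ Set.Ico (0:ℝ) T,
      HasDerivWithinAt (fun u => ∫ s in (0:ℝ)..u, h s) (h x) (Set.Ici x) x := by
    intro h hh x hx
    have hmem' : Set.Ico (0:ℝ) T ∈ 𝓝[Set.Ioi x] x :=
      Filter.mem_of_superset (Ioo_mem_nhdsGT_of_mem ⟨le_rfl, hx.2⟩)
        (fun u hu => ⟨le_trans hx.1 hu.1.le, hu.2⟩)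
    apply intervalIntegral.integral_hasDerivWithinAt_right
    · apply ContinuousOn.intervalIntegrable
      rw [Set.uIcc_of_le hx.1]
      exact hh.mono fun u hu => ⟨hu.1, lt_of_le_of_lt hu.2 hx.2⟩
    · exact ⟨Set.Ico 0 T, hmem', hh.aestronglyMeasurable measurableSet_Ico⟩
    · exact (hh x hx).mono_of_mem_nhdsWithin hmem'
  -- generic equality-of-functions helper
  have heqfun : ∀ F G : ℝ → ℝ, F 0 = G 0 →
      (∀ b : ℝ, 0 ≤ b → b < T → ContinuousOn (fun u => F u - G u) (Set.Icc 0 b)) →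
      (∀ x ∈ Set.Ico (0:ℝ) T, HasDerivWithinAt (fun u => F u - G u) 0 (Set.Ici x) x) →
      ∀ t ∈ Set.Ico (0:ℝ) T, F t = G t := by
    intro F G h0 hc hdz t ht
    have h1 := constant_of_has_deriv_right_zero (hc t ht.1 ht.2)
      (fun x hx => hdz x ⟨hx.1, lt_trans hx.2 ht.2⟩) t (right_mem_Icc.2 ht.1)
    have h2 : F t - G t = 0 := by rw [h1, h0, sub_self]
    linarith
  -- Claim A
  have hA : ∀ j : ℕ, j + 1 ≤ d → ∀ t ∈ Set.Ico (0:ℝ) T,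
      iteratedDerivWithin (d - 1 - j) y (Set.Ico 0 T) t
        = (j.factorial : ℝ)⁻¹ * ∫ s in (0:ℝ)..t, (t - s) ^ j
            * iteratedDerivWithin d y (Set.Ico 0 T) s := by
    intro j
    induction j with
    | zero =>
      intro _ t ht
      simp only [Nat.sub_zero, pow_zero, one_mul, Nat.factorial_zero, Nat.cast_one, inv_one]
      apply heqfun _ _ ?h0 ?hcont ?hdz t ht
      case h0 =>
        rw [hinit (d - 1) (by omega)]
        simp
      case hcont =>
        intro b hb0 hbT
        apply ContinuousOn.sub
        · exact (hkc (d - 1) (by omega)).mono fun u hu => ⟨hu.1, lt_of_le_of_lt hu.2 hbT⟩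
        · have := blasius_cont_Jint hgc 0 hb0 hbT
          apply this.congr
          intro u hu
          apply intervalIntegral.integral_congr
          intro s _
          simp
      case hdz =>
        intro x hx
        have h1 := toIci hx (hder (d - 1) (by omega) x hx)
        rw [show d - 1 + 1 = d from by omega] at h1
        have h2 := hFTC _ hgc x hx
        exact (h1.sub h2).congr_deriv (sub_self _)
    | succ j ih =>
      intro hj t ht
      apply heqfun _ _ ?h0 ?hcont ?hdz t ht
      case h0 =>
        rw [hinit (d - 1 - (j + 1)) (by omega)]
        simp
      case hcont =>
        intro b hb0 hbT
        apply ContinuousOn.sub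
        · exact (hkc (d - 1 - (j + 1)) (by omega)).mono
            fun u hu => ⟨hu.1, lt_of_le_of_lt hu.2 hbT⟩
        · exact continuousOn_const.mul (blasius_cont_Jint hgc (j + 1) hb0 hbT)
      case hdz =>
        intro x hx
        have h1 := toIci hx (hder (d - 1 - (j + 1)) (by omega) x hx)
        rw [show d - 1 - (j + 1) + 1 = d - 1 - j from by omega, ih (by omega) x hx] at h1
        have h2 : HasDerivWithinAt (fun u => ((j + 1).factorial : ℝ)⁻¹
            * ∫ s in (0:ℝ)..u, (u - s) ^ (j + 1) * iteratedDerivWithin d y (Set.Ico 0 T) s)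
            ((j.factorial : ℝ)⁻¹ * ∫ s in (0:ℝ)..x, (x - s) ^ j
              * iteratedDerivWithin d y (Set.Ico 0 T) s) (Set.Ici x) x := by
          have h3 := (blasius_hasDeriv_Jint hgc j hx.1 hx.2).const_mul
            (((j + 1).factorial : ℝ)⁻¹)
          refine h3.congr_deriv (Eq.symm ?_)
          rw [Nat.factorial_succ]
          push_cast
          rw [← mul_assoc]
          congr 1
          have hjf : (j.factorial : ℝ) ≠ 0 := by positivity
          field_simp
        exact (h1.sub h2).congr_deriv (sub_self _)
  -- Claim B
  have hB : ∀ t ∈ Set.Ico (0:ℝ) T, (∫ s in (0:ℝ)..t, y s)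
      = (d.factorial : ℝ)⁻¹ * ∫ s in (0:ℝ)..t, (t - s) ^ d
          * iteratedDerivWithin d y (Set.Ico 0 T) s := by
    apply heqfun
    · simp
    · intro b hb0 hbT
      apply ContinuousOn.sub
      · have hI : IntegrableOn y (Set.uIcc (0:ℝ) b) volume := by
          rw [Set.uIcc_of_le hb0]
          exact (hyc.mono fun u hu => ⟨hu.1, lt_of_le_of_lt hu.2 hbT⟩).integrableOn_Icc
        have := intervalIntegral.continuousOn_primitive_interval hI
        rwa [Set.uIcc_of_le hb0] at this
      · exact continuousOn_const.mul (blasius_cont_Jint hgc d hb0 hbT)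
    · intro x hx
      have h1 := hFTC y hyc x hx
      have h2 : HasDerivWithinAt (fun u => (d.factorial : ℝ)⁻¹
          * ∫ s in (0:ℝ)..u, (u - s) ^ d * iteratedDerivWithin d y (Set.Ico 0 T) s)
          (y x) (Set.Ici x) x := by
        have h3 := (blasius_hasDeriv_Jint hgc (d - 1) hx.1 hx.2).const_mul
          ((d.factorial : ℝ)⁻¹)
        rw [show d - 1 + 1 = d from by omega] at h3
        have h4 := hA (d - 1) (by omega) x hx
        rw [show d - 1 - (d - 1) = 0 from by omega, iteratedDerivWithin_zero] at h4
        refine h3.congr_deriv (Eq.symm ?_)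
        rw [h4]
        rw [show d = (d - 1) + 1 from by omega, Nat.factorial_succ]
        push_cast
        have hjf : ((d-1).factorial : ℝ) ≠ 0 := by positivity
        rw [show (d:ℕ) - 1 + 1 = d from by omega]
        field_simp
      exact (h1.sub h2).congr_deriv (sub_self _)
  -- Claim C
  have hgd : ∀ x ∈ Set.Ico (0:ℝ) T, HasDerivWithinAt (iteratedDerivWithin d y (Set.Ico 0 T))
      ((2:ℝ) ^ d * y x * iteratedDerivWithin d y (Set.Ico 0 T) x) (Set.Ico 0 T) x := by
    intro x hx
    have := hder d le_rfl x hx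
    rwa [hODE x hx] at this
  have hC : ∀ t ∈ Set.Ico (0:ℝ) T, iteratedDerivWithin d y (Set.Ico 0 T) t
      = Real.exp ((2:ℝ) ^ d * ∫ s in (0:ℝ)..t, y s) := by
    intro t ht
    have hconst := constant_of_has_deriv_right_zero
      (f := fun u => iteratedDerivWithin d y (Set.Ico 0 T) u
        * Real.exp (-((2:ℝ) ^ d * ∫ s in (0:ℝ)..u, y s))) (a := 0) (b := t)
      ?cont ?deriv t (right_mem_Icc.2 ht.1)
    case cont =>
      apply ContinuousOn.mul
      · exact hgc.mono fun u hu => ⟨hu.1, lt_of_le_of_lt hu.2 ht.2⟩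
      · apply Real.continuous_exp.comp_continuousOn
        apply ContinuousOn.neg
        apply ContinuousOn.mul continuousOn_const
        have hI : IntegrableOn y (Set.uIcc (0:ℝ) t) volume := by
          rw [Set.uIcc_of_le ht.1]
          exact (hyc.mono fun u hu => ⟨hu.1, lt_of_le_of_lt hu.2 ht.2⟩).integrableOn_Icc
        have := intervalIntegral.continuousOn_primitive_interval hI
        rwa [Set.uIcc_of_le ht.1] at this
    case deriv =>
      intro x hx
      have hx' : x ∈ Set.Ico (0:ℝ) T := ⟨hx.1, lt_trans hx.2 ht.2⟩
      have h1 := toIci hx' (hgd x hx')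
      have h2 : HasDerivWithinAt (fun u => Real.exp (-((2:ℝ) ^ d * ∫ s in (0:ℝ)..u, y s)))
          (Real.exp (-((2:ℝ) ^ d * ∫ s in (0:ℝ)..x, y s)) * (-((2:ℝ) ^ d * y x)))
          (Set.Ici x) x :=
        (((hFTC y hyc x hx').const_mul ((2:ℝ) ^ d)).neg).exp
      have h3 := h1.mul h2
      refine h3.congr_deriv (Eq.symm ?_)
      ring
    -- conclude
    have h0 : iteratedDerivWithin d y (Set.Ico 0 T) 0
        * Real.exp (-((2:ℝ) ^ d * ∫ s in (0:ℝ)..(0:ℝ), y s)) = 1 := by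
      rw [hinitd]
      simp
    have hconst2 : iteratedDerivWithin d y (Set.Ico 0 T) t
        * Real.exp (-((2:ℝ) ^ d * ∫ s in (0:ℝ)..t, y s))
        = iteratedDerivWithin d y (Set.Ico 0 T) 0
          * Real.exp (-((2:ℝ) ^ d * ∫ s in (0:ℝ)..(0:ℝ), y s)) := hconst
    rw [h0] at hconst2
    rw [Real.exp_neg] at hconst2
    have hexp : Real.exp ((2:ℝ) ^ d * ∫ s in (0:ℝ)..t, y s) ≠ 0 := Real.exp_ne_zero _
    field_simp at hconst2
    exact hconst2
  -- assemble
  intro t ht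
  have hgt := hC t ht
  have hBt := hB t ht
  constructor
  · apply intervalIntegral.integral_nonneg ht.1
    intro u hu
    have hu' : u ∈ Set.Ico (0:ℝ) T := ⟨hu.1, lt_of_le_of_lt hu.2 ht.2⟩
    have hpos : 0 < iteratedDerivWithin d y (Set.Ico 0 T) u := by
      rw [hC u hu']; exact Real.exp_pos _
    exact mul_nonneg (pow_nonneg (sub_nonneg.2 hu.2) d) hpos.le
  · rw [hgt, hBt]
    congr 1
    ring

/-- If `y : [0,T)` is the maximal solution of `y^{(d+1)} = 2^d·y·y^{(d)}`
with the Blasius initial conditions, then for every `p`: `f_p ≤ f_{p+1}` on `[0,∞)`, and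
`f_p ≤ y^{(d)}` on `[0,T)`. -/
theorem blasiusIter_monotone_le (d : ℕ) (hd : 1 ≤ d)
    (T : ℝ) (y : ℝ → ℝ) (hy : IsMaxBlasiusSol d (2 ^ d) T y) :
    ∀ p : ℕ,
      (∀ t : ℝ, 0 ≤ t → blasiusIter d p t ≤ blasiusIter d (p + 1) t) ∧
      (∀ t ∈ Set.Ico (0 : ℝ) T,
        blasiusIter d p t ≤ iteratedDerivWithin d y (Set.Ico 0 T) t) := by
  obtain ⟨hT, hsol, -⟩ := hy
  have hkey := blasius_key hd hsol
  have hgc : ContinuousOn (iteratedDerivWithin d y (Set.Ico 0 T)) (Set.Ico (0:ℝ) T) := by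
    apply (hsol.1).continuousOn_iteratedDerivWithin _ (uniqueDiffOn_Ico 0 T)
    exact_mod_cast le_self_add
  have hle : ∀ p : ℕ, ∀ t ∈ Set.Ico (0:ℝ) T,
      blasiusIter d p t ≤ iteratedDerivWithin d y (Set.Ico 0 T) t := by
    intro p
    induction p with
    | zero =>
      intro t ht
      have h2 := (hkey t ht).2
      show (1:ℝ) ≤ _
      rw [h2, ← Real.exp_zero]
      exact Real.exp_le_exp.2 (mul_nonneg (by positivity) (hkey t ht).1)
    | succ p ih =>
      intro t ht
      have h2 := (hkey t ht).2
      rw [h2]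
      show Real.exp _ ≤ Real.exp _
      apply Real.exp_le_exp.2
      apply mul_le_mul_of_nonneg_left _ (by positivity)
      apply intervalIntegral.integral_mono_on ht.1
      · apply Continuous.intervalIntegrable
        exact ((continuous_const.sub continuous_id).pow d).mul (blasiusIter_cont d p)
      · apply ContinuousOn.intervalIntegrable
        rw [Set.uIcc_of_le ht.1]
        exact (((continuous_const.sub continuous_id).pow d).continuousOn).mul
          (hgc.mono fun u hu => ⟨hu.1, lt_of_le_of_lt hu.2 ht.2⟩)
      · intro u hu
        exact mul_le_mul_of_nonneg_left (ih u ⟨hu.1, lt_of_le_of_lt hu.2 ht.2⟩)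
          (pow_nonneg (sub_nonneg.2 hu.2) d)
  exact fun p => ⟨blasiusIter_mono d p, hle p⟩
end
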